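/- For i = 1,2 let A_i = {(x,y) ∈ ℝ² : |x| ≤ γ_i/2, |y − m_i x| ≤ δ/2} with 0 < δ ≤ γ₂ ≤ γ₁ and slopes |m_i| ≤ K for a fixed constant K, let α = |arctan m₁ − arctan m₂|, let β > 0, Q_i = A_i × (0,β) ⊂ ℝ³, ξ_i ∈ ℝ³, and let φ_i be measurable functions with 0 ≤ φ_i ≤ 1 and supp φ_i ⊂ ξ_i + Q_i. Then for every 1 ≤ s < ∞ there is a constant C depending only on K and s such that ∫_{ℝ³} |φ₁ ∗ φ₂|^s dx ≤ C · (βδ)^{s+1} γ₂^s γ₁ / (1 + (γ₂/δ) α)^{s−1}. -/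

import Mathlib

open MeasureTheory Set
open scoped ENNReal

private lemma strip_meas (U : Set ℝ) (hU : MeasurableSet U) (m a δ : ℝ) :
    MeasurableSet {p : ℝ × ℝ | p.1 ∈ U ∧ |p.2 - m * p.1 - a| ≤ δ / 2} := by
  have h1 : MeasurableSet {p : ℝ × ℝ | p.1 ∈ U} := measurable_fst hU
  have h2 : MeasurableSet {p : ℝ × ℝ | |p.2 - m * p.1 - a| ≤ δ / 2} := by
    apply measurableSet_le _ measurable_const
    fun_prop
  exact h1.inter h2

private lemma strip_vol (U : Set ℝ) (hU : MeasurableSet U) (m a δ : ℝ) :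
    volume {p : ℝ × ℝ | p.1 ∈ U ∧ |p.2 - m * p.1 - a| ≤ δ / 2}
      ≤ volume U * ENNReal.ofReal δ := by
  have hS := strip_meas U hU m a δ
  rw [Measure.volume_eq_prod ℝ ℝ, Measure.prod_apply hS]
  have hsec : ∀ u : ℝ,
      volume (Prod.mk u ⁻¹' {p : ℝ × ℝ | p.1 ∈ U ∧ |p.2 - m * p.1 - a| ≤ δ / 2})
        = U.indicator (fun _ => ENNReal.ofReal δ) u := by
    intro u
    by_cases hu : u ∈ U
    · have he : Prod.mk u ⁻¹' {p : ℝ × ℝ | p.1 ∈ U ∧ |p.2 - m * p.1 - a| ≤ δ / 2}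
          = Icc (m * u + a - δ / 2) (m * u + a + δ / 2) := by
        ext v
        simp only [mem_preimage, mem_setOf_eq, mem_Icc, hu, true_and, abs_le]
        constructor <;> intro h <;> constructor <;> linarith [h.1, h.2]
      rw [he, Real.volume_Icc, indicator_of_mem hu]
      congr 1
      ring
    · have he : Prod.mk u ⁻¹' {p : ℝ × ℝ | p.1 ∈ U ∧ |p.2 - m * p.1 - a| ≤ δ / 2}
          = (∅ : Set ℝ) := by
        ext v; simp [hu]
      rw [he, indicator_of_notMem hu]
      simp
  calc ∫⁻ u, volume (Prod.mk u ⁻¹' {p : ℝ × ℝ | p.1 ∈ U ∧ |p.2 - m * p.1 - a| ≤ δ / 2})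
      = ∫⁻ u, U.indicator (fun _ => ENNReal.ofReal δ) u := lintegral_congr hsec
    _ = ENNReal.ofReal δ * volume U := by
        rw [lintegral_indicator hU, setLIntegral_const]
    _ ≤ volume U * ENNReal.ofReal δ := le_of_eq (mul_comm _ _)

private lemma box_vol (u₁ u₂ m a δ l β : ℝ) :
    volume (({p : ℝ × ℝ | p.1 ∈ Icc u₁ u₂ ∧ |p.2 - m * p.1 - a| ≤ δ / 2}) ×ˢ Ioo l (l + β))
      ≤ ENNReal.ofReal (u₂ - u₁) * ENNReal.ofReal δ * ENNReal.ofReal β := by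
  rw [Measure.volume_eq_prod (ℝ × ℝ) ℝ, Measure.prod_prod]
  refine mul_le_mul' ?_ ?_
  · calc volume {p : ℝ × ℝ | p.1 ∈ Icc u₁ u₂ ∧ |p.2 - m * p.1 - a| ≤ δ / 2}
        ≤ volume (Icc u₁ u₂) * ENNReal.ofReal δ := strip_vol _ measurableSet_Icc m a δ
      _ = ENNReal.ofReal (u₂ - u₁) * ENNReal.ofReal δ := by rw [Real.volume_Icc]
  · rw [Real.volume_Ioo]
    simp

private lemma l1_bound (γ δ β m : ℝ) (ξ : (ℝ × ℝ) × ℝ) (φ : (ℝ × ℝ) × ℝ → ℝ)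
    (hφ : ∀ x, 0 ≤ φ x ∧ φ x ≤ 1)
    (hsupp : Function.support φ ⊆ (fun y => ξ + y) ''
      (({p : ℝ × ℝ | |p.1| ≤ γ / 2 ∧ |p.2 - m * p.1| ≤ δ / 2}) ×ˢ Ioo (0 : ℝ) β)) :
    ∫⁻ y, ENNReal.ofReal (φ y) ≤ ENNReal.ofReal γ * ENNReal.ofReal δ * ENNReal.ofReal β := by
  set E : Set (ℝ × ℝ) := {p | p.1 ∈ Icc (ξ.1.1 - γ / 2) (ξ.1.1 + γ / 2) ∧
      |p.2 - m * p.1 - (ξ.1.2 - m * ξ.1.1)| ≤ δ / 2} with hEdef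
  have hb : ∀ y, ENNReal.ofReal (φ y)
      ≤ (E ×ˢ Ioo ξ.2 (ξ.2 + β)).indicator (fun _ => (1 : ℝ≥0∞)) y := by
    intro y
    by_cases hy : φ y = 0
    · simp [hy]
    · obtain ⟨q, ⟨⟨hq1, hq2⟩, hq3⟩, rfl⟩ := hsupp hy
      rw [indicator_of_mem]
      · exact ENNReal.ofReal_le_one.2 (hφ _).2
      · rw [mem_Ioo] at hq3
        refine ⟨⟨?_, ?_⟩, ?_⟩
        · rw [abs_le] at hq1
          simp only [Prod.fst_add, Prod.snd_add, mem_Icc]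
          constructor <;> [linarith [hq1.1]; linarith [hq1.2]]
        · show |(ξ + q).1.2 - m * (ξ + q).1.1 - (ξ.1.2 - m * ξ.1.1)| ≤ δ / 2
          have he : (ξ + q).1.2 - m * (ξ + q).1.1 - (ξ.1.2 - m * ξ.1.1)
              = q.1.2 - m * q.1.1 := by
            simp only [Prod.fst_add, Prod.snd_add]; ring
          rw [he]; exact hq2
        · show (ξ + q).2 ∈ Ioo ξ.2 (ξ.2 + β)
          simp only [Prod.snd_add, mem_Ioo]
          constructor <;> linarith [hq3.1, hq3.2]
  calc ∫⁻ y, ENNReal.ofReal (φ y)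
      ≤ ∫⁻ y, (E ×ˢ Ioo ξ.2 (ξ.2 + β)).indicator (fun _ => (1 : ℝ≥0∞)) y :=
        lintegral_mono hb
    _ = volume (E ×ˢ Ioo ξ.2 (ξ.2 + β)) := by
        rw [lintegral_indicator ((strip_meas _ measurableSet_Icc m _ δ).prod measurableSet_Ioo),
          setLIntegral_one]
    _ ≤ ENNReal.ofReal (ξ.1.1 + γ / 2 - (ξ.1.1 - γ / 2)) * ENNReal.ofReal δ * ENNReal.ofReal β :=
        box_vol (ξ.1.1 - γ / 2) (ξ.1.1 + γ / 2) m (ξ.1.2 - m * ξ.1.1) δ ξ.2 β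
    _ = ENNReal.ofReal γ * ENNReal.ofReal δ * ENNReal.ofReal β := by
        rw [show ξ.1.1 + γ / 2 - (ξ.1.1 - γ / 2) = γ from by ring]

private lemma conv_le (x : (ℝ × ℝ) × ℝ) (φ₁ φ₂ : (ℝ × ℝ) × ℝ → ℝ)
    (hφ₁b : ∀ y, 0 ≤ φ₁ y ∧ φ₁ y ≤ 1) (hφ₂b : ∀ y, 0 ≤ φ₂ y ∧ φ₂ y ≤ 1)
    (E : Set (ℝ × ℝ)) (hE : MeasurableSet E) (I : Set ℝ) (hI : MeasurableSet I)
    (P : ℝ) (hP : 0 ≤ P)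
    (hvol : volume (E ×ˢ I) ≤ ENNReal.ofReal P)
    (hmem : ∀ y : (ℝ × ℝ) × ℝ, φ₁ y * φ₂ (x - y) ≠ 0 → y.1 ∈ E ∧ y.2 ∈ I) :
    ∫ y, φ₁ y * φ₂ (x - y) ≤ P := by
  have hEI : MeasurableSet (E ×ˢ I) := hE.prod hI
  have hlt : volume (E ×ˢ I) < ⊤ := lt_of_le_of_lt hvol ENNReal.ofReal_lt_top
  have hint : Integrable ((E ×ˢ I).indicator fun _ => (1 : ℝ)) :=
    (integrable_indicator_iff hEI).2 (integrableOn_const hlt.ne)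
  have hmono : ∀ y, φ₁ y * φ₂ (x - y) ≤ (E ×ˢ I).indicator (fun _ => (1 : ℝ)) y := by
    intro y
    by_cases h : φ₁ y * φ₂ (x - y) = 0
    · rw [h]; exact indicator_nonneg (fun _ _ => zero_le_one) y
    · rw [indicator_of_mem (mem_prod.2 ⟨(hmem y h).1, (hmem y h).2⟩)]
      exact mul_le_one₀ (hφ₁b y).2 (hφ₂b _).1 (hφ₂b _).2
  calc ∫ y, φ₁ y * φ₂ (x - y)
      ≤ ∫ y, (E ×ˢ I).indicator (fun _ => (1 : ℝ)) y :=
        integral_mono_of_nonneg (ae_of_all _ fun y => mul_nonneg (hφ₁b y).1 (hφ₂b _).1)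
          hint (ae_of_all _ hmono)
    _ = (volume (E ×ˢ I)).toReal := by
        rw [integral_indicator_const (1 : ℝ) hEI]; simp; rfl
    _ ≤ P := ENNReal.toReal_le_of_le_ofReal hP hvol

set_option maxHeartbeats 1000000 in
/-- `L^s` bound for the convolution of two bump functions adapted to translated slabs
`Q_i = A_i × (0,β)` over thin parallelograms `A_i`:
`∫ |φ₁ ∗ φ₂|^s ≤ C (βδ)^{s+1} γ₂^s γ₁ / (1 + (γ₂/δ)α)^{s-1}`. -/
theorem statement14 (K s : ℝ) (hK : 0 < K) (hs : 1 ≤ s) :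
    ∃ C > 0, ∀ δ γ₁ γ₂ m₁ m₂ β : ℝ, ∀ ξ₁ ξ₂ : (ℝ × ℝ) × ℝ,
      ∀ φ₁ φ₂ : (ℝ × ℝ) × ℝ → ℝ,
      0 < δ → δ ≤ γ₂ → γ₂ ≤ γ₁ → |m₁| ≤ K → |m₂| ≤ K → 0 < β →
      Measurable φ₁ → Measurable φ₂ →
      (∀ x, 0 ≤ φ₁ x ∧ φ₁ x ≤ 1) → (∀ x, 0 ≤ φ₂ x ∧ φ₂ x ≤ 1) →
      Function.support φ₁ ⊆ (fun y => ξ₁ + y) ''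
        (({p : ℝ × ℝ | |p.1| ≤ γ₁ / 2 ∧ |p.2 - m₁ * p.1| ≤ δ / 2}) ×ˢ Ioo (0 : ℝ) β) →
      Function.support φ₂ ⊆ (fun y => ξ₂ + y) ''
        (({p : ℝ × ℝ | |p.1| ≤ γ₂ / 2 ∧ |p.2 - m₂ * p.1| ≤ δ / 2}) ×ˢ Ioo (0 : ℝ) β) →
      ∫⁻ x : (ℝ × ℝ) × ℝ, ENNReal.ofReal (|∫ y, φ₁ y * φ₂ (x - y)| ^ s) ≤
        ENNReal.ofReal
          (C * (β * δ) ^ (s + 1) * γ₂ ^ s * γ₁ /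
            (1 + (γ₂ / δ) * |Real.arctan m₁ - Real.arctan m₂|) ^ (s - 1)) := by
  refine ⟨(4 : ℝ) ^ (s - 1), Real.rpow_pos_of_pos (by norm_num) _, ?_⟩
  intro δ γ₁ γ₂ m₁ m₂ β ξ₁ ξ₂ φ₁ φ₂ hδ hδγ₂ hγ hm₁ hm₂ hβ hφ₁m hφ₂m hφ₁b hφ₂b hs₁ hs₂
  set α := |Real.arctan m₁ - Real.arctan m₂| with hα
  have hα0 : 0 ≤ α := abs_nonneg _
  set D : ℝ := 1 + γ₂ / δ * α with hD
  have hγ₂ : 0 < γ₂ := lt_of_lt_of_le hδ hδγ₂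
  have hγ₁ : 0 < γ₁ := lt_of_lt_of_le hγ₂ hγ
  have hD1 : 1 ≤ D := le_add_of_nonneg_right (by positivity)
  have hDpos : 0 < D := lt_of_lt_of_le one_pos hD1
  set P : ℝ := β * δ * (4 * γ₂ / D) with hP
  have hPpos : 0 < P := by positivity
  -- membership facts from the supports
  have hmem₁ : ∀ y : (ℝ × ℝ) × ℝ, φ₁ y ≠ 0 →
      |y.1.2 - m₁ * y.1.1 - (ξ₁.1.2 - m₁ * ξ₁.1.1)| ≤ δ / 2 ∧ y.2 ∈ Ioo ξ₁.2 (ξ₁.2 + β) := by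
    intro y hy
    obtain ⟨q, ⟨⟨hq1, hq2⟩, hq3⟩, rfl⟩ := hs₁ hy
    rw [mem_Ioo] at hq3
    constructor
    · have he : (ξ₁ + q).1.2 - m₁ * (ξ₁ + q).1.1 - (ξ₁.1.2 - m₁ * ξ₁.1.1)
          = q.1.2 - m₁ * q.1.1 := by
        simp only [Prod.fst_add, Prod.snd_add]; ring
      rw [he]; exact hq2
    · simp only [Prod.snd_add, mem_Ioo]
      constructor <;> linarith [hq3.1, hq3.2]
  have hmem₂ : ∀ x y : (ℝ × ℝ) × ℝ, φ₂ (x - y) ≠ 0 →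
      |x.1.1 - y.1.1 - ξ₂.1.1| ≤ γ₂ / 2 ∧
      |y.1.2 - m₂ * y.1.1 - (x.1.2 - ξ₂.1.2 - m₂ * (x.1.1 - ξ₂.1.1))| ≤ δ / 2 := by
    intro x y hy
    obtain ⟨q, ⟨⟨hq1, hq2⟩, hq3⟩, heq⟩ := hs₂ hy
    have hq : q = x - y - ξ₂ := by
      have : ξ₂ + q = x - y := heq
      rw [← this]; abel
    subst hq
    constructor
    · have he : (x - y - ξ₂).1.1 = x.1.1 - y.1.1 - ξ₂.1.1 := by
        simp [Prod.fst_sub, Prod.snd_sub]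
      rw [he] at hq1; exact hq1
    · have he : (x - y - ξ₂).1.2 - m₂ * (x - y - ξ₂).1.1
          = -(y.1.2 - m₂ * y.1.1 - (x.1.2 - ξ₂.1.2 - m₂ * (x.1.1 - ξ₂.1.1))) := by
        simp only [Prod.fst_sub, Prod.snd_sub]; ring
      rw [he, abs_neg] at hq2; exact hq2
  -- the pointwise bound
  have hkey : ∀ x : (ℝ × ℝ) × ℝ, (∫ y, φ₁ y * φ₂ (x - y)) ≤ P := by
    intro x
    by_cases ht : γ₂ / δ * α ≤ 1
    · -- small angle case: use the γ₂ width
      refine conv_le x φ₁ φ₂ hφ₁b hφ₂b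
        {p : ℝ × ℝ | p.1 ∈ Icc (x.1.1 - ξ₂.1.1 - γ₂ / 2) (x.1.1 - ξ₂.1.1 + γ₂ / 2) ∧
          |p.2 - m₁ * p.1 - (ξ₁.1.2 - m₁ * ξ₁.1.1)| ≤ δ / 2}
        (strip_meas _ measurableSet_Icc _ _ _) (Ioo ξ₁.2 (ξ₁.2 + β)) measurableSet_Ioo
        P hPpos.le ?_ ?_
      · calc volume _
            ≤ ENNReal.ofReal (x.1.1 - ξ₂.1.1 + γ₂ / 2 - (x.1.1 - ξ₂.1.1 - γ₂ / 2)) *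
              ENNReal.ofReal δ * ENNReal.ofReal β :=
              box_vol (x.1.1 - ξ₂.1.1 - γ₂ / 2) (x.1.1 - ξ₂.1.1 + γ₂ / 2) m₁
                (ξ₁.1.2 - m₁ * ξ₁.1.1) δ ξ₁.2 β
          _ = ENNReal.ofReal (γ₂ * δ * β) := by
              rw [show x.1.1 - ξ₂.1.1 + γ₂ / 2 - (x.1.1 - ξ₂.1.1 - γ₂ / 2) = γ₂ from by ring,
                ← ENNReal.ofReal_mul hγ₂.le, ← ENNReal.ofReal_mul (by positivity)]
          _ ≤ ENNReal.ofReal P := by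
              apply ENNReal.ofReal_le_ofReal
              have hD2 : D ≤ 2 := by rw [hD]; linarith
              have h4 : γ₂ ≤ 4 * γ₂ / D := by
                rw [le_div_iff₀ hDpos]; nlinarith
              rw [hP]
              nlinarith [mul_le_mul_of_nonneg_left h4 (mul_pos hβ hδ).le]
      · intro y hy
        rcases mul_ne_zero_iff.1 hy with ⟨h1, h2⟩
        have ha := hmem₁ y h1
        have hb := hmem₂ x y h2
        refine ⟨⟨?_, ha.1⟩, ha.2⟩
        rw [abs_le] at hb
        have := hb.1
        rw [mem_Icc]
        constructor <;> linarith [this.1, this.2]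
    · -- transversal case: use the angle
      have htt : 1 < γ₂ / δ * α := not_le.1 ht
      have hαpos : 0 < α := by
        rcases lt_or_eq_of_le hα0 with h | h
        · exact h
        · exfalso; rw [← h] at htt; simp only [mul_zero] at htt; linarith
      have hmne : m₂ - m₁ ≠ 0 := by
        intro h
        have : m₁ = m₂ := by linarith [sub_eq_zero.1 h]
        rw [hα, this] at hαpos
        simp at hαpos
      have hM : 0 < |m₂ - m₁| := abs_pos.2 hmne
      have hαm : α ≤ |m₂ - m₁| := by
        have hlip : LipschitzWith 1 Real.arctan := by
          apply lipschitzWith_of_nnnorm_deriv_le Real.differentiable_arctan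
          intro x
          have hd : deriv Real.arctan x = 1 / (1 + x ^ 2) := by rw [Real.deriv_arctan]
          rw [hd, ← NNReal.coe_le_coe, coe_nnnorm, Real.norm_eq_abs, NNReal.coe_one,
            abs_of_nonneg (by positivity), div_le_one (by positivity)]
          nlinarith [sq_nonneg x]
        have := hlip.dist_le_mul m₁ m₂
        rw [Real.dist_eq, Real.dist_eq] at this
        calc α ≤ |m₁ - m₂| := by rw [hα]; simpa using this
          _ = |m₂ - m₁| := abs_sub_comm _ _
      set a₁ : ℝ := ξ₁.1.2 - m₁ * ξ₁.1.1 with ha₁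
      set a₂ : ℝ := x.1.2 - ξ₂.1.2 - m₂ * (x.1.1 - ξ₂.1.1) with ha₂
      set c₀ : ℝ := (a₁ - a₂) / (m₂ - m₁) with hc₀
      set r : ℝ := δ / |m₂ - m₁| with hr
      have hrpos : 0 < r := by positivity
      refine conv_le x φ₁ φ₂ hφ₁b hφ₂b
        {p : ℝ × ℝ | p.1 ∈ Icc (c₀ - r) (c₀ + r) ∧ |p.2 - m₁ * p.1 - a₁| ≤ δ / 2}
        (strip_meas _ measurableSet_Icc _ _ _) (Ioo ξ₁.2 (ξ₁.2 + β)) measurableSet_Ioo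
        P hPpos.le ?_ ?_
      · calc volume _
            ≤ ENNReal.ofReal (c₀ + r - (c₀ - r)) * ENNReal.ofReal δ * ENNReal.ofReal β :=
              box_vol (c₀ - r) (c₀ + r) m₁ a₁ δ ξ₁.2 β
          _ = ENNReal.ofReal (2 * r * δ * β) := by
              rw [show c₀ + r - (c₀ - r) = 2 * r from by ring,
                ← ENNReal.ofReal_mul (mul_nonneg (by norm_num) hrpos.le),
                ← ENNReal.ofReal_mul (mul_nonneg (mul_nonneg (by norm_num) hrpos.le) hδ.le)]
          _ ≤ ENNReal.ofReal P := by
              apply ENNReal.ofReal_le_ofReal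
              -- 2 r δ β ≤ β δ (4 γ₂ / D)
              have h1 : 2 * r ≤ 2 * δ / α := by
                rw [hr, ← mul_div_assoc, div_le_div_iff₀ hM hαpos]
                nlinarith [hαm, hδ.le]
              have h2 : 2 * δ / α ≤ 4 * γ₂ / D := by
                rw [div_le_div_iff₀ hαpos hDpos]
                have hda : δ * (γ₂ / δ * α) = γ₂ * α := by field_simp
                have hlt : δ < γ₂ * α := by nlinarith [htt, hδ]
                rw [hD]
                nlinarith [hα0, hγ₂, hlt, hda, htt, hδ]
              rw [hP]
              have h3 : 2 * r ≤ 4 * γ₂ / D := le_trans h1 h2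
              nlinarith [mul_pos hβ hδ, hrpos]
      · intro y hy
        rcases mul_ne_zero_iff.1 hy with ⟨h1, h2⟩
        have ha := hmem₁ y h1
        have hb := hmem₂ x y h2
        refine ⟨⟨?_, ha.1⟩, ha.2⟩
        -- the two strips force y.1.1 close to c₀
        have hsum : |(m₂ - m₁) * y.1.1 - (a₁ - a₂)| ≤ δ := by
          calc |(m₂ - m₁) * y.1.1 - (a₁ - a₂)|
              = |(y.1.2 - m₁ * y.1.1 - a₁) - (y.1.2 - m₂ * y.1.1 - a₂)| := by
                congr 1; ring
            _ ≤ |y.1.2 - m₁ * y.1.1 - a₁| + |y.1.2 - m₂ * y.1.1 - a₂| := abs_sub _ _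
            _ ≤ δ / 2 + δ / 2 := add_le_add ha.1 hb.2
            _ = δ := by ring
        have habs : |m₂ - m₁| * |y.1.1 - c₀| = |(m₂ - m₁) * y.1.1 - (a₁ - a₂)| := by
          rw [← abs_mul]
          congr 1
          have hc : (m₂ - m₁) * c₀ = a₁ - a₂ := by rw [hc₀]; field_simp
          linear_combination -hc
        have hclose : |y.1.1 - c₀| ≤ r := by
          rw [hr, le_div_iff₀ hM]
          rw [mul_comm, habs]
          exact hsum
        rw [abs_le] at hclose
        rw [mem_Icc]
        constructor <;> linarith [hclose.1, hclose.2]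
  -- nonnegativity of the convolution
  have hconv_nn : ∀ x : (ℝ × ℝ) × ℝ, 0 ≤ ∫ y, φ₁ y * φ₂ (x - y) :=
    fun x => integral_nonneg fun y => mul_nonneg (hφ₁b y).1 (hφ₂b _).1
  -- L¹ bound on the convolution
  have hL1 := l1_bound γ₁ δ β m₁ ξ₁ φ₁ hφ₁b hs₁
  have hL2 := l1_bound γ₂ δ β m₂ ξ₂ φ₂ hφ₂b hs₂
  have hmφ : Measurable fun z : ((ℝ × ℝ) × ℝ) × ((ℝ × ℝ) × ℝ) =>
      ENNReal.ofReal (φ₁ z.2 * φ₂ (z.1 - z.2)) :=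
    ((hφ₁m.comp measurable_snd).mul (hφ₂m.comp (measurable_fst.sub measurable_snd))).ennreal_ofReal
  haveI hri : (volume : Measure ((ℝ × ℝ) × ℝ)).IsAddRightInvariant := by
    rw [Measure.volume_eq_prod (ℝ × ℝ) ℝ]
    haveI : (volume : Measure (ℝ × ℝ)).IsAddRightInvariant := by
      rw [Measure.volume_eq_prod ℝ ℝ]; infer_instance
    infer_instance
  have hconv_int : ∫⁻ x : (ℝ × ℝ) × ℝ, ENNReal.ofReal (∫ y, φ₁ y * φ₂ (x - y))
      ≤ (∫⁻ y, ENNReal.ofReal (φ₁ y)) * ∫⁻ y, ENNReal.ofReal (φ₂ y) := by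
    have step1 : ∀ x : (ℝ × ℝ) × ℝ, ENNReal.ofReal (∫ y, φ₁ y * φ₂ (x - y))
        ≤ ∫⁻ y, ENNReal.ofReal (φ₁ y * φ₂ (x - y)) := by
      intro x
      by_cases h : Integrable fun y => φ₁ y * φ₂ (x - y)
      · rw [← ofReal_integral_eq_lintegral_ofReal h
          (ae_of_all _ fun y => mul_nonneg (hφ₁b y).1 (hφ₂b _).1)]
      · rw [integral_undef h]
        simp
    calc ∫⁻ x : (ℝ × ℝ) × ℝ, ENNReal.ofReal (∫ y, φ₁ y * φ₂ (x - y))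
        ≤ ∫⁻ x, ∫⁻ y, ENNReal.ofReal (φ₁ y * φ₂ (x - y)) := lintegral_mono step1
      _ = ∫⁻ y, ∫⁻ x, ENNReal.ofReal (φ₁ y * φ₂ (x - y)) :=
          lintegral_lintegral_swap hmφ.aemeasurable
      _ = ∫⁻ y, ENNReal.ofReal (φ₁ y) * ∫⁻ x, ENNReal.ofReal (φ₂ (x - y)) := by
          refine lintegral_congr fun y => ?_
          simp_rw [ENNReal.ofReal_mul (hφ₁b y).1]
          have hf : Measurable fun x : (ℝ × ℝ) × ℝ => ENNReal.ofReal (φ₂ (x - y)) := by fun_prop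
          rw [lintegral_const_mul _ hf]
      _ = ∫⁻ y, ENNReal.ofReal (φ₁ y) * ∫⁻ x, ENNReal.ofReal (φ₂ x) := by
          refine lintegral_congr fun y => ?_
          congr 1
          exact lintegral_sub_right_eq_self (fun x => ENNReal.ofReal (φ₂ x)) y
      _ = (∫⁻ y, ENNReal.ofReal (φ₁ y)) * ∫⁻ x, ENNReal.ofReal (φ₂ x) :=
          lintegral_mul_const _ hφ₁m.ennreal_ofReal
  -- pointwise rpow bound
  have hpt : ∀ x : (ℝ × ℝ) × ℝ, ENNReal.ofReal (|∫ y, φ₁ y * φ₂ (x - y)| ^ s)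
      ≤ ENNReal.ofReal (P ^ (s - 1)) * ENNReal.ofReal (∫ y, φ₁ y * φ₂ (x - y)) := by
    intro x
    rw [← ENNReal.ofReal_mul (by positivity)]
    apply ENNReal.ofReal_le_ofReal
    rw [abs_of_nonneg (hconv_nn x)]
    rcases eq_or_lt_of_le (hconv_nn x) with h0 | h0
    · rw [← h0, Real.zero_rpow (by linarith : s ≠ 0), mul_zero]
    · calc (∫ y, φ₁ y * φ₂ (x - y)) ^ s
          = (∫ y, φ₁ y * φ₂ (x - y)) ^ (s - 1) * (∫ y, φ₁ y * φ₂ (x - y)) := by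
            rw [← Real.rpow_add_one (ne_of_gt h0) (s - 1), sub_add_cancel]
        _ ≤ P ^ (s - 1) * (∫ y, φ₁ y * φ₂ (x - y)) :=
            mul_le_mul_of_nonneg_right
              (Real.rpow_le_rpow (hconv_nn x) (hkey x) (by linarith)) (hconv_nn x)
  -- final algebra
  have hbd : (0 : ℝ) < β * δ := mul_pos hβ hδ
  have e1 : (β * δ) ^ (s + 1) = (β * δ) ^ (s - 1) * ((β * δ) * (β * δ)) := by
    rw [show (β * δ) * (β * δ) = (β * δ) ^ (2 : ℝ) from by
      rw [show (2 : ℝ) = 1 + 1 from by norm_num, Real.rpow_add hbd, Real.rpow_one]]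
    rw [← Real.rpow_add hbd]
    congr 1
    ring
  have eγ : γ₂ ^ s = γ₂ ^ (s - 1) * γ₂ := by
    rw [← Real.rpow_add_one (ne_of_gt hγ₂) (s - 1), sub_add_cancel]
  have key : P ^ (s - 1) * (γ₁ * δ * β * (γ₂ * δ * β))
      = 4 ^ (s - 1) * (β * δ) ^ (s + 1) * γ₂ ^ s * γ₁ / D ^ (s - 1) := by
    rw [hP, Real.mul_rpow hbd.le (by positivity),
      Real.div_rpow (by positivity) hDpos.le,
      Real.mul_rpow (by norm_num : (0 : ℝ) ≤ 4) hγ₂.le, e1, eγ]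
    have hDne : D ^ (s - 1) ≠ 0 := by positivity
    field_simp
  calc ∫⁻ x : (ℝ × ℝ) × ℝ, ENNReal.ofReal (|∫ y, φ₁ y * φ₂ (x - y)| ^ s)
      ≤ ∫⁻ x, ENNReal.ofReal (P ^ (s - 1)) * ENNReal.ofReal (∫ y, φ₁ y * φ₂ (x - y)) :=
        lintegral_mono hpt
    _ = ENNReal.ofReal (P ^ (s - 1)) * ∫⁻ x, ENNReal.ofReal (∫ y, φ₁ y * φ₂ (x - y)) :=
        lintegral_const_mul' _ _ ENNReal.ofReal_ne_top
    _ ≤ ENNReal.ofReal (P ^ (s - 1)) *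
        ((ENNReal.ofReal γ₁ * ENNReal.ofReal δ * ENNReal.ofReal β) *
          (ENNReal.ofReal γ₂ * ENNReal.ofReal δ * ENNReal.ofReal β)) := by
        exact mul_le_mul' le_rfl (le_trans hconv_int (mul_le_mul' hL1 hL2))
    _ = ENNReal.ofReal (P ^ (s - 1) * (γ₁ * δ * β * (γ₂ * δ * β))) := by
        rw [← ENNReal.ofReal_mul (by positivity), ← ENNReal.ofReal_mul (by positivity),
          ← ENNReal.ofReal_mul (by positivity), ← ENNReal.ofReal_mul (by positivity),
          ← ENNReal.ofReal_mul (by positivity), ← ENNReal.ofReal_mul (by positivity)]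
    _ ≤ ENNReal.ofReal (4 ^ (s - 1) * (β * δ) ^ (s + 1) * γ₂ ^ s * γ₁ / D ^ (s - 1)) :=
        ENNReal.ofReal_le_ofReal (le_of_eq key)
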